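/- Kershaw's inequality: for all x > 0 and 0 < r < 1, Γ(x+1)/Γ(x+r) > (x + r/2)^{1−r}. -/

import Mathlib

open Real Set Filter Topology

lemma N_deriv (t : ℝ) (ht0 : 0 < t) (ht1 : t < 1) :
    HasDerivAt (fun t : ℝ => 2*t/(1-t^2) - (log (1+t) - log (1-t)))
      (4*t^2/(1-t^2)^2) t := by
  have h1 : (0:ℝ) < 1 + t := by linarith
  have h2 : (0:ℝ) < 1 - t := by linarith
  have h3 : (1:ℝ) - t^2 ≠ 0 := by nlinarith
  have hfrac : HasDerivAt (fun t : ℝ => 2*t/(1-t^2)) ((2+2*t^2)/(1-t^2)^2) t := by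
    have hnum : HasDerivAt (fun t : ℝ => 2*t) 2 t := by
      simpa using (hasDerivAt_id t).const_mul 2
    have hden : HasDerivAt (fun t : ℝ => 1 - t^2) (-(2*t)) t := by
      simpa using (hasDerivAt_pow 2 t).const_sub 1
    have := hnum.div hden h3
    refine this.congr_deriv ?_
    field_simp
    ring
  have hl1 : HasDerivAt (fun t : ℝ => log (1+t)) (1/(1+t)) t := by
    have h := (((hasDerivAt_id t).const_add 1)).log (ne_of_gt h1)
    simpa using h
  have hl2 : HasDerivAt (fun t : ℝ => log (1-t)) (-(1/(1-t))) t := by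
    have h := (((hasDerivAt_id t).const_sub 1)).log (ne_of_gt h2)
    simpa [neg_div] using h
  have := hfrac.sub (hl1.sub hl2)
  refine this.congr_deriv ?_
  rw [sub_neg_eq_add]
  field_simp
  ring

lemma N_pos (u : ℝ) (hu0 : 0 < u) (hu1 : u < 1) :
    log (1+u) - log (1-u) < 2*u/(1-u^2) := by
  set N : ℝ → ℝ := fun t => 2*t/(1-t^2) - (log (1+t) - log (1-t)) with hN
  have key : StrictMonoOn N (Ico 0 1) := by
    apply strictMonoOn_of_deriv_pos (convex_Ico 0 1)
    · apply ContinuousOn.sub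
      · apply ContinuousOn.div (by fun_prop) (by fun_prop)
        intro t ht
        simp only [mem_Ico] at ht
        nlinarith [ht.1, ht.2]
      · apply ContinuousOn.sub
        · apply ContinuousOn.log (by fun_prop)
          intro t ht; simp only [mem_Ico] at ht; nlinarith [ht.1, ht.2]
        · apply ContinuousOn.log (by fun_prop)
          intro t ht; simp only [mem_Ico] at ht; nlinarith [ht.1, ht.2]
    · intro t ht
      rw [interior_Ico] at ht
      obtain ⟨ht0, ht1⟩ := ht
      rw [(N_deriv t ht0 ht1).deriv]
      have h3 : (0:ℝ) < 1 - t^2 := by nlinarith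
      positivity
  have h0 : (0:ℝ) ∈ Ico (0:ℝ) 1 := by constructor <;> norm_num
  have hu : u ∈ Ico (0:ℝ) 1 := ⟨le_of_lt hu0, hu1⟩
  have := key h0 hu hu0
  simp only [hN] at this
  norm_num at this
  linarith

lemma phi_mono : StrictMonoOn (fun u : ℝ => (log (1+u) - log (1-u))/u) (Ioo 0 1) := by
  apply strictMonoOn_of_deriv_pos (convex_Ioo 0 1)
  · apply ContinuousOn.div
    · apply ContinuousOn.sub
      · apply ContinuousOn.log (by fun_prop)
        intro t ht; simp only [mem_Ioo] at ht; nlinarith [ht.1, ht.2]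
      · apply ContinuousOn.log (by fun_prop)
        intro t ht; simp only [mem_Ioo] at ht; nlinarith [ht.1, ht.2]
    · fun_prop
    · intro t ht; simp only [mem_Ioo] at ht; exact ne_of_gt ht.1
  · intro t ht
    rw [interior_Ioo] at ht
    obtain ⟨ht0, ht1⟩ := ht
    have h1 : (0:ℝ) < 1 + t := by linarith
    have h2 : (0:ℝ) < 1 - t := by linarith
    have h3 : (1:ℝ) - t^2 ≠ 0 := by nlinarith
    have hg : HasDerivAt (fun u : ℝ => log (1+u) - log (1-u)) (2/(1-t^2)) t := by
      have hl1 : HasDerivAt (fun u : ℝ => log (1+u)) (1/(1+t)) t := by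
        simpa using (((hasDerivAt_id t).const_add 1)).log (ne_of_gt h1)
      have hl2 : HasDerivAt (fun u : ℝ => log (1-u)) (-(1/(1-t))) t := by
        simpa [neg_div] using (((hasDerivAt_id t).const_sub 1)).log (ne_of_gt h2)
      have := hl1.sub hl2
      refine this.congr_deriv ?_
      rw [sub_neg_eq_add]
      field_simp
      ring
    have hd := hg.div (hasDerivAt_id t) (ne_of_gt ht0)
    simp only [id_eq] at hd
    rw [show deriv (fun u : ℝ => (log (1+u) - log (1-u))/u) t = _ from hd.deriv]
    have hnum : 0 < 2/(1-t^2) * t - (log (1+t) - log (1-t)) * 1 := by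
      have := N_pos t ht0 ht1
      have e : 2/(1-t^2) * t = 2*t/(1-t^2) := by ring
      rw [e, mul_one]
      linarith
    exact div_pos hnum (by positivity)

lemma kershaw_core (b m : ℝ) (hb : 1 < b) (hm0 : 0 < m) (hm1 : m < 1) :
    log (b+m) - log (b-m) < m * (log (b+1) - log (b-1)) := by
  have hb0 : (0:ℝ) < b := by linarith
  have hu : m/b ∈ Ioo (0:ℝ) 1 := ⟨by positivity, by rw [div_lt_one hb0]; linarith⟩
  have hv : 1/b ∈ Ioo (0:ℝ) 1 := ⟨by positivity, by rw [div_lt_one hb0]; linarith⟩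
  have huv : m/b < 1/b := by
    apply div_lt_div_of_pos_right hm1 hb0
  have key := phi_mono hu hv huv
  simp only at key
  have e1 : log (1 + m/b) = log (b+m) - log b := by
    rw [← log_div (by positivity) (ne_of_gt hb0)]
    congr 1
    field_simp
  have e2 : log (1 - m/b) = log (b-m) - log b := by
    have h : (0:ℝ) < 1 - m/b := by linarith [hu.2]
    rw [← log_div (by nlinarith : b - m ≠ 0) (ne_of_gt hb0)]
    congr 1
    field_simp
  have e3 : log (1 + 1/b) = log (b+1) - log b := by
    rw [← log_div (by positivity) (ne_of_gt hb0)]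
    congr 1
    field_simp
  have e4 : log (1 - 1/b) = log (b-1) - log b := by
    rw [← log_div (by nlinarith : b - 1 ≠ 0) (ne_of_gt hb0)]
    congr 1
    field_simp
  rw [e1, e2, e3, e4] at key
  have h6 := (div_lt_iff₀ hu.1).mp key
  have e5 : (log (b+1) - log b - (log (b-1) - log b)) / (1/b) * (m/b)
      = m * (log (b+1) - log (b-1)) := by
    field_simp
    ring
  rw [e5] at h6
  linarith

-- step lemma
lemma L_step (s y : ℝ) (hs0 : 0 < s) (hs1 : s < 1) (hy : 0 < y) :
    log (Gamma (y+1+1)) - log (Gamma (y+1+s)) + (s-1) * log (y+1+s/2)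
      < log (Gamma (y+1)) - log (Gamma (y+s)) + (s-1) * log (y+s/2) := by
  have hg1 : Gamma (y+1+1) = (y+1) * Gamma (y+1) := Gamma_add_one (by positivity)
  have hg2 : Gamma (y+1+s) = (y+s) * Gamma (y+s) := by
    have : y+1+s = (y+s)+1 := by ring
    rw [this]
    exact Gamma_add_one (by positivity)
  have hΓ1 : 0 < Gamma (y+1) := Gamma_pos_of_pos (by positivity)
  have hΓs : 0 < Gamma (y+s) := Gamma_pos_of_pos (by positivity)
  rw [hg1, hg2, log_mul (by positivity) (ne_of_gt hΓ1), log_mul (by positivity) (ne_of_gt hΓs)]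
  have core := kershaw_core (2*y+1+s) (1-s) (by linarith) (by linarith) (by linarith)
  have c1 : log (2*y+1+s + (1-s)) = log 2 + log (y+1) := by
    rw [← log_mul (by norm_num) (by positivity)]; congr 1; ring
  have c2 : log (2*y+1+s - (1-s)) = log 2 + log (y+s) := by
    rw [← log_mul (by norm_num) (by positivity)]; congr 1; ring
  have c3 : log (2*y+1+s + 1) = log 2 + log (y+1+s/2) := by
    rw [← log_mul (by norm_num) (by positivity)]; congr 1; ring
  have c4 : log (2*y+1+s - 1) = log 2 + log (y+s/2) := by
    rw [← log_mul (by norm_num) (by positivity)]; congr 1; ring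
  rw [c1, c2, c3, c4] at core
  nlinarith [core]

-- lower bound lemma
lemma L_lower (s y : ℝ) (hs0 : 0 < s) (hs1 : s < 1) (hy : 0 < y) :
    (1-s) * (log y - log (y+s/2))
      ≤ log (Gamma (y+1)) - log (Gamma (y+s)) + (s-1) * log (y+s/2) := by
  have hΓy : 0 < Gamma y := Gamma_pos_of_pos hy
  have hconv := convexOn_log_Gamma.2 (mem_Ioi.mpr hy) (mem_Ioi.mpr (by positivity : (0:ℝ) < y+1))
    (by linarith : (0:ℝ) ≤ 1-s) (le_of_lt hs0) (by ring)
  simp only [smul_eq_mul, Function.comp_apply] at hconv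
  have e : (1-s) * y + s * (y+1) = y + s := by ring
  rw [e] at hconv
  have hg1 : Gamma (y+1) = y * Gamma y := Gamma_add_one (ne_of_gt hy)
  rw [hg1, log_mul (ne_of_gt hy) (ne_of_gt hΓy)] at hconv ⊢
  -- hconv : log (Gamma (y+s)) ≤ (1-s) * log (Gamma y) + s * (log y + log (Gamma y))
  nlinarith [hconv]

theorem stmt6 (x r : ℝ) (hx : 0 < x) (hr0 : 0 < r) (hr1 : r < 1) :
    Real.Gamma (x + 1) / Real.Gamma (x + r) > (x + r / 2) ^ (1 - r) := by
  set L : ℝ → ℝ := fun y => log (Gamma (y+1)) - log (Gamma (y+r)) + (r-1) * log (y+r/2)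
    with hL
  have step : ∀ y : ℝ, 0 < y → L (y+1) < L y := fun y hy => L_step r y hr0 hr1 hy
  have mono : ∀ n : ℕ, L (x+1+n) ≤ L (x+1) := by
    intro n
    induction n with
    | zero => simp
    | succ k ih =>
      have h1 : (0:ℝ) < x+1+k := by positivity
      have := step _ h1
      have e : x+1+(k+1:ℕ) = (x+1+k)+1 := by push_cast; ring
      rw [e]
      linarith
  have lower : ∀ n : ℕ, (1-r) * (log (x+1+n) - log (x+1+n+r/2)) ≤ L (x+1) := by
    intro n
    exact le_trans (L_lower r (x+1+n) hr0 hr1 (by positivity)) (mono n)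
  have tendsto0 : Tendsto (fun n : ℕ => (1-r) * (log (x+1+n) - log (x+1+n+r/2)))
      atTop (𝓝 0) := by
    have hq : Tendsto (fun n : ℕ => (x+1+(n:ℝ))/(x+1+(n:ℝ)+r/2)) atTop (𝓝 1) := by
      have h1 : Tendsto (fun n : ℕ => x+1+(n:ℝ)+r/2) atTop atTop := by
        apply tendsto_atTop_add_const_right
        exact tendsto_atTop_add_const_left _ _ tendsto_natCast_atTop_atTop
      have h2 : Tendsto (fun n : ℕ => (r/2)/(x+1+(n:ℝ)+r/2)) atTop (𝓝 0) :=
        Tendsto.div_atTop tendsto_const_nhds h1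
      have h3 : Tendsto (fun n : ℕ => 1 - (r/2)/(x+1+(n:ℝ)+r/2)) atTop (𝓝 (1-0)) :=
        tendsto_const_nhds.sub h2
      rw [sub_zero] at h3
      apply h3.congr
      intro n
      have hpos : (0:ℝ) < x+1+(n:ℝ)+r/2 := by positivity
      field_simp
      ring
    have hlog : Tendsto (fun n : ℕ => log ((x+1+(n:ℝ))/(x+1+(n:ℝ)+r/2))) atTop (𝓝 0) := by
      have := (Real.continuousAt_log (by norm_num : (1:ℝ) ≠ 0)).tendsto.comp hq
      simpa [Function.comp_def] using this
    have := hlog.const_mul (1-r)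
    rw [mul_zero] at this
    apply this.congr
    intro n
    rw [log_div (by positivity) (by positivity)]
  have hL1 : 0 ≤ L (x+1) := le_of_tendsto' tendsto0 lower
  have hLx : 0 < L x := lt_of_le_of_lt hL1 (step x hx)
  -- now convert
  have hΓ1 : 0 < Gamma (x+1) := Gamma_pos_of_pos (by positivity)
  have hΓr : 0 < Gamma (x+r) := Gamma_pos_of_pos (by positivity)
  rw [gt_iff_lt, ← exp_log (show (0:ℝ) < Gamma (x+1)/Gamma (x+r) from div_pos hΓ1 hΓr),
    rpow_def_of_pos (by positivity)]
  apply exp_lt_exp.mpr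
  rw [log_div (ne_of_gt hΓ1) (ne_of_gt hΓr)]
  simp only [hL] at hLx
  nlinarith [hLx]
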